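/- Let d : [0,∞) → ℝ be twice differentiable with d(0) > d_min ≥ 0 and suppose φ(t) := d_min² - d(t)² - k·ḋ(t) ≤ 0 for all t, where k > 0. Then d(t) > 0 for all t; moreover if additionally d(t)² ≤ d_min² at some time t, then ḋ(t) ≥ 0, i.e., the distance cannot be decreasing while inside the margin. -/
import Mathlib


theorem stmt13 (d : ℝ → ℝ) (hd : Differentiable ℝ d) (hd2 : Differentiable ℝ (deriv d))
    (dmin k : ℝ) (hdmin : 0 ≤ dmin) (h0 : d 0 > dmin) (hk : 0 < k)
    (hφ : ∀ t, 0 ≤ t → dmin ^ 2 - (d t) ^ 2 - k * deriv d t ≤ 0) :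
    (∀ t, 0 ≤ t → d t > 0) ∧
    (∀ t, 0 ≤ t → (d t) ^ 2 ≤ dmin ^ 2 → deriv d t ≥ 0) := by
  have hd0 : 0 < d 0 := lt_of_le_of_lt hdmin h0
  constructor
  · -- positivity of d
    by_contra hcon
    push_neg at hcon
    obtain ⟨t₀, ht₀, hdt₀⟩ := hcon
    -- first time d ≤ 0
    set S : Set ℝ := {t | t ∈ Set.Icc 0 t₀ ∧ d t ≤ 0} with hS
    have hSne : S.Nonempty := ⟨t₀, ⟨ht₀, le_rfl⟩, hdt₀⟩
    have hSclosed : IsClosed S := by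
      have : S = Set.Icc 0 t₀ ∩ d ⁻¹' Set.Iic 0 := by
        ext x; simp [hS, Set.mem_Icc, and_assoc]
      rw [this]
      exact isClosed_Icc.inter (isClosed_Iic.preimage hd.continuous)
    have hSbdd : BddBelow S := ⟨0, fun x hx => hx.1.1⟩
    set t₁ := sInf S with ht₁def
    have ht₁mem : t₁ ∈ S := hSclosed.csInf_mem hSne hSbdd
    have ht₁0 : 0 ≤ t₁ := ht₁mem.1.1
    have ht₁t₀ : t₁ ≤ t₀ := ht₁mem.1.2
    have hdt₁ : d t₁ ≤ 0 := ht₁mem.2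
    have ht₁pos : 0 < t₁ := by
      rcases lt_or_eq_of_le ht₁0 with h | h
      · exact h
      · exfalso; rw [← h] at hdt₁; linarith
    -- on [0, t₁), d > 0
    have hpos : ∀ t, t ∈ Set.Ico (0:ℝ) t₁ → 0 < d t := by
      intro t ht
      by_contra h
      push_neg at h
      have : t ∈ S := ⟨⟨ht.1, le_trans (le_of_lt ht.2) ht₁t₀⟩, h⟩
      exact absurd (csInf_le hSbdd this) (not_le.mpr ht.2)
    -- comparison: d t ≥ ((d 0)⁻¹ + t₁/k)⁻¹ on [0, t₁)
    set C : ℝ := (d 0)⁻¹ + t₁ / k with hC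
    have hCpos : 0 < C := by positivity
    have hkey : ∀ t, t ∈ Set.Ico (0:ℝ) t₁ → C⁻¹ ≤ d t := by
      intro t ht
      set F : ℝ → ℝ := fun s => s / k - (d s)⁻¹ with hF
      have hmono : MonotoneOn F (Set.Icc 0 t) := by
        have hderiv : ∀ x ∈ Set.Ioo (0:ℝ) t,
            HasDerivAt F (1 / k - -(deriv d x) / (d x) ^ 2) x := by
          intro x hx
          have hdx : 0 < d x := hpos x ⟨le_of_lt hx.1, lt_of_lt_of_le hx.2 (le_of_lt ht.2)⟩
          have h1 : HasDerivAt (fun s => (d s)⁻¹) (-(deriv d x) / (d x) ^ 2) x :=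
            ((hd x).hasDerivAt).inv (ne_of_gt hdx)
          have h2 : HasDerivAt (fun s : ℝ => s / k) (1 / k) x := by
            simpa using (hasDerivAt_id x).div_const k
          exact h2.sub h1
        apply monotoneOn_of_deriv_nonneg (convex_Icc 0 t)
        · apply ContinuousOn.sub
          · exact (continuous_id.div_const k).continuousOn
          · apply ContinuousOn.inv₀ hd.continuous.continuousOn
            intro x hx
            have hx' : x ∈ Set.Ico (0:ℝ) t₁ :=
              ⟨hx.1, lt_of_le_of_lt hx.2 ht.2⟩
            exact ne_of_gt (hpos x hx')
        · intro x hx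
          rw [interior_Icc] at hx
          exact ((hderiv x hx).differentiableAt).differentiableWithinAt
        · intro x hx
          rw [interior_Icc] at hx
          rw [(hderiv x hx).deriv]
          have hdx : 0 < d x := hpos x ⟨le_of_lt hx.1, lt_of_lt_of_le hx.2 (le_of_lt ht.2)⟩
          have hphi := hφ x (le_of_lt hx.1)
          have h1 : -(d x) ^ 2 ≤ k * deriv d x := by nlinarith [sq_nonneg dmin]
          have h2 : 0 ≤ (k * deriv d x + (d x) ^ 2) / (k * (d x) ^ 2) := by
            apply div_nonneg (by linarith) (by positivity)
          have heq : 1 / k - -(deriv d x) / (d x) ^ 2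
              = (k * deriv d x + (d x) ^ 2) / (k * (d x) ^ 2) := by
            field_simp
            ring
          rw [heq]; exact h2
      have hF0 : F 0 ≤ F t := hmono ⟨le_rfl, ht.1⟩ ⟨ht.1, le_rfl⟩ ht.1
      have hdt : 0 < d t := hpos t ht
      have hinv : (d t)⁻¹ ≤ C := by
        have : F 0 = -(d 0)⁻¹ := by simp [hF]
        have hle : (d t)⁻¹ ≤ (d 0)⁻¹ + t / k := by
          simp only [hF] at hF0
          simp at hF0
          linarith
        have : t / k ≤ t₁ / k := by
          gcongr; exact le_of_lt ht.2
        linarith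
      -- from (d t)⁻¹ ≤ C, d t > 0, C > 0: C⁻¹ ≤ d t
      have h1 : 1 ≤ d t * C := by
        have := mul_le_mul_of_nonneg_left hinv (le_of_lt hdt)
        rwa [mul_inv_cancel₀ (ne_of_gt hdt)] at this
      rw [inv_le_iff_one_le_mul₀ hCpos]
      linarith [mul_comm (d t) C ▸ h1]
    -- take the limit t → t₁⁻
    have htendsto : Filter.Tendsto d (nhdsWithin t₁ (Set.Iio t₁)) (nhds (d t₁)) :=
      (hd.continuous.continuousAt).continuousWithinAt.tendsto
    have hev : ∀ᶠ t in nhdsWithin t₁ (Set.Iio t₁), C⁻¹ ≤ d t := by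
      filter_upwards [Ioo_mem_nhdsLT_of_mem (Set.mem_Ioc.mpr ⟨ht₁pos, le_rfl⟩)] with t ht
      exact hkey t ⟨le_of_lt ht.1, ht.2⟩
    have : C⁻¹ ≤ d t₁ := ge_of_tendsto htendsto hev
    have : 0 < d t₁ := lt_of_lt_of_le (inv_pos.mpr hCpos) this
    linarith
  · intro t ht h2
    have := hφ t ht
    have : 0 ≤ k * deriv d t := by linarith
    nlinarith
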